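/- With Γ = {A₁,…,Aₙ}, Γ ⊨ A in miP-tV if and only if the inference rule whose instances are all structures obtained by appending conclusion A (with no dischargement) below any argument structures for A₁,…,Aₙ is logically valid relative to some set of reductions J. -/

import Mathlib

/-- Propositional atoms: `⊥` and countably many atoms `p n`. -/
inductive PAtom : Type
  | bot
  | p (n : ℕ)
deriving DecidableEq

/-- Formulas of the propositional language. -/
inductive Formula : Type
  | atom (a : PAtom)
  | and (A B : Formula)
  | or (A B : Formula)
  | imp (A B : Formula)
deriving DecidableEq

/-- Atomic rules (level ≤ 1): a list of atomic premises and an atomic conclusion.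
An axiom (level-0 rule) is `⟨[], a⟩`. -/
structure ARule where
  prems : List PAtom
  concl : PAtom
deriving DecidableEq

/-- The atomic explosion rules: from `⊥` infer any atom. -/
def AE : Set ARule := { r | ∃ a, r = ⟨[PAtom.bot], a⟩ }

/-- An atomic base is a set of atomic rules containing atomic explosion. -/
def IsBase (B : Set ARule) : Prop := AE ⊆ B

/-- Argument structures: natural-deduction-style trees with arbitrary inference
steps. `hyp A` is an assumption; `node c prems` is an inference to conclusion `c`
from the listed premise subtrees, where each premise comes with a list of
assumption-formulas it discharges in that subtree. An axiom is `node c []`. -/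
inductive Arg : Type
  | hyp (A : Formula)
  | node (concl : Formula) (prems : List (List Formula × Arg))

/-- Conclusion of an argument structure. -/
def Arg.concl : Arg → Formula
  | .hyp A => A
  | .node c _ => c

mutual
/-- The (open, i.e. undischarged) assumption-formulas of an argument structure. -/
def Arg.assumptions : Arg → Finset Formula
  | .hyp A => {A}
  | .node _ prems => assumptionsList prems

def assumptionsList : List (List Formula × Arg) → Finset Formula
  | [] => ∅
  | pr :: rest => (Arg.assumptions pr.2 \ pr.1.toFinset) ∪ assumptionsList rest
end

mutual
/-- Substitution of argument structures for the open assumptions of an argument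
structure; `bound` records the assumption-formulas discharged above. -/
def Arg.subst (σ : Formula → Arg) (bound : Finset Formula) : Arg → Arg
  | .hyp A => if A ∈ bound then .hyp A else σ A
  | .node c prems => .node c (substList σ bound prems)

def substList (σ : Formula → Arg) (bound : Finset Formula) :
    List (List Formula × Arg) → List (List Formula × Arg)
  | [] => []
  | pr :: rest => (pr.1, Arg.subst σ (bound ∪ pr.1.toFinset) pr.2) :: substList σ bound rest
end

/-- `AtomDeriv B D` : the argument structure `D` is an atomic derivation of the
base `B` (every node is an application of a rule of `B`). -/
inductive AtomDeriv (B : Set ARule) : Arg → Prop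
  | app (r : ARule) (hr : r ∈ B) (subs : List Arg)
      (hc : subs.map Arg.concl = r.prems.map Formula.atom)
      (hs : ∀ D ∈ subs, AtomDeriv B D) :
      AtomDeriv B (.node (.atom r.concl) (subs.map (fun D => ([], D))))

/-- A reduction is a partial function on argument structures. -/
abbrev Red := Arg → Option Arg

/-- One-step reduction relative to a set of reductions `J`: apply some `φ ∈ J` to
some substructure. -/
inductive Step (J : Set Red) : Arg → Arg → Prop
  | red {φ : Red} {D D' : Arg} : φ ∈ J → φ D = some D' → Step J D D'
  | congr {c : Formula} {pre post : List (List Formula × Arg)} {ds : List Formula}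
      {D D' : Arg} : Step J D D' →
      Step J (.node c (pre ++ (ds, D) :: post)) (.node c (pre ++ (ds, D') :: post))

/-- `D` reduces to `D'` relative to `J` (reflexive-transitive closure). -/
def Reduces (J : Set Red) : Arg → Arg → Prop := Relation.ReflTransGen (Step J)

/-- Validity of closed arguments `⟨D, J⟩` on a base `B`, by recursion on the
conclusion: a closed argument with atomic conclusion must reduce to an atomic
derivation of the base; one with compound conclusion must reduce to a canonical
(introduction-ended) closed structure whose immediate substructures are valid
(for `→`, valid as an open argument: under every extension of the reduction set
and of the base, substitution of valid closed arguments for the discharged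
assumption yields a valid closed argument). -/
def CValid : Formula → Set ARule → Set Red → Arg → Prop
  | .atom a, B, J, D => ∃ D', Reduces J D D' ∧ AtomDeriv B D' ∧ D'.concl = .atom a
  | .and A C, B, J, D => ∃ D1 D2 : Arg,
      Reduces J D (.node (A.and C) [([], D1), ([], D2)]) ∧
      D1.assumptions = ∅ ∧ D2.assumptions = ∅ ∧ D1.concl = A ∧ D2.concl = C ∧
      CValid A B J D1 ∧ CValid C B J D2
  | .or A C, B, J, D =>
      (∃ D1 : Arg, Reduces J D (.node (A.or C) [([], D1)]) ∧
        D1.assumptions = ∅ ∧ D1.concl = A ∧ CValid A B J D1) ∨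
      (∃ D1 : Arg, Reduces J D (.node (A.or C) [([], D1)]) ∧
        D1.assumptions = ∅ ∧ D1.concl = C ∧ CValid C B J D1)
  | .imp A C, B, J, D => ∃ D1 : Arg,
      Reduces J D (.node (A.imp C) [([A], D1)]) ∧
      D1.assumptions ⊆ {A} ∧ D1.concl = C ∧
      ∀ H : Set Red, J ⊆ H → ∀ X : Set ARule, B ⊆ X → ∀ E : Arg,
        E.assumptions = ∅ → E.concl = A → CValid A X H E →
        CValid C X H (Arg.subst (fun _ => E) ∅ D1)

/-- Validity of an argument `⟨D, J⟩` on a base `B` (Prawitz, monotonic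
introduction-based form): closed arguments as in `CValid`; an open argument is
valid iff for every extension `H ⊇ J` of the reduction set, every extension
`X ⊇ B` of the base, and every assignment of closed arguments valid on `X`
(w.r.t. `H`) to its open assumptions, the resulting closed instance is valid
on `X` w.r.t. `H`. -/
def Valid (B : Set ARule) (D : Arg) (J : Set Red) : Prop :=
  if D.assumptions = ∅ then CValid D.concl B J D
  else ∀ (σ : Formula → Arg) (H : Set Red) (X : Set ARule), J ⊆ H → B ⊆ X →
    (∀ A ∈ D.assumptions, (σ A).assumptions = ∅ ∧ (σ A).concl = A ∧ CValid A X H (σ A)) →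
    CValid D.concl X H (Arg.subst σ ∅ D)

/-- Logical validity: validity on every atomic base. -/
def LValid (D : Arg) (J : Set Red) : Prop :=
  ∀ B : Set ARule, IsBase B → Valid B D J

/-- miP-tV consequence over a base: `Γ ⊨_B A` iff there is an argument `⟨D, J⟩`
valid on `B` with `D` an argument structure from `Γ` to `A`. -/
def EntailsOn (B : Set ARule) (Γ : Finset Formula) (A : Formula) : Prop :=
  ∃ (D : Arg) (J : Set Red), D.assumptions = Γ ∧ D.concl = A ∧ Valid B D J

/-- miP-tV logical consequence: `Γ ⊨ A` iff there is a logically valid argument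
`⟨D, J⟩` with `D` from `Γ` to `A`. -/
def Entails (Γ : Finset Formula) (A : Formula) : Prop :=
  ∃ (D : Arg) (J : Set Red), D.assumptions = Γ ∧ D.concl = A ∧ LValid D J

/-- Validity (relative to `J`, on `B`) of the inference rule whose instances append
conclusion `A` (discharging nothing) below arbitrary argument structures for the
formulas in `As`: for all `H ⊇ J`, all extensions `X ⊇ B` and every instance, if
the immediate subarguments paired with `H` are valid on `X`, so is the composed
structure paired with `H`. -/
def RuleValidOn (B : Set ARule) (J : Set Red) (As : List Formula) (A : Formula) : Prop :=
  ∀ H : Set Red, J ⊆ H → ∀ X : Set ARule, B ⊆ X → ∀ Ds : List Arg,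
    List.Forall₂ (fun (D : Arg) (G : Formula) => D.concl = G ∧ Valid X D H) Ds As →
    Valid X (.node A (Ds.map (fun D => ([], D)))) H
section Aux

open Relation List

theorem Step.mono {J H : Set Red} (hJH : J ⊆ H) {D D' : Arg} (h : Step J D D') : Step H D D' := by
  induction h with
  | red hφ he => exact .red (hJH hφ) he
  | congr _ ih => exact .congr ih

theorem Reduces.mono {J H : Set Red} (hJH : J ⊆ H) {D D' : Arg} (h : Reduces J D D') :
    Reduces H D D' :=
  Relation.ReflTransGen.mono (r := Step J) (p := Step H) (fun _ _ h => Step.mono hJH h) _ _ h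

theorem AtomDeriv.mono {B X : Set ARule} (hBX : B ⊆ X) {D : Arg} (h : AtomDeriv B D) :
    AtomDeriv X D := by
  induction h with
  | app r hr subs hc hs ih => exact .app r (hBX hr) subs hc ih

theorem CValid.mono {B X : Set ARule} {J H : Set Red} (hBX : B ⊆ X) (hJH : J ⊆ H)
    {A : Formula} {D : Arg} (h : CValid A B J D) : CValid A X H D := by
  induction A generalizing D with
  | atom a =>
      obtain ⟨D', r, ad, hc⟩ := h
      exact ⟨D', Reduces.mono hJH r, AtomDeriv.mono hBX ad, hc⟩
  | and A C ihA ihC =>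
      obtain ⟨D1, D2, r, h1, h2, h3, h4, h5, h6⟩ := h
      exact ⟨D1, D2, Reduces.mono hJH r, h1, h2, h3, h4, ihA h5, ihC h6⟩
  | or A C ihA ihC =>
      rcases h with ⟨D1, r, h1, h2, h3⟩ | ⟨D1, r, h1, h2, h3⟩
      · exact Or.inl ⟨D1, Reduces.mono hJH r, h1, h2, ihA h3⟩
      · exact Or.inr ⟨D1, Reduces.mono hJH r, h1, h2, ihC h3⟩
  | imp A C ihA ihC =>
      obtain ⟨D1, r, h1, h2, h3⟩ := h
      refine ⟨D1, Reduces.mono hJH r, h1, h2, ?_⟩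
      intro H' hH' X' hX' E hE1 hE2 hE3
      exact h3 H' (hJH.trans hH') X' (hBX.trans hX') E hE1 hE2 hE3

theorem CValid_of_reduces {B : Set ARule} {J : Set Red} {A : Formula} {D D' : Arg}
    (h : Reduces J D D') (hv : CValid A B J D') : CValid A B J D := by
  cases A with
  | atom a =>
      obtain ⟨E, r, ad, hc⟩ := hv
      exact ⟨E, Relation.ReflTransGen.trans h r, ad, hc⟩
  | and A C =>
      obtain ⟨D1, D2, r, h1, h2, h3, h4, h5, h6⟩ := hv
      exact ⟨D1, D2, Relation.ReflTransGen.trans h r, h1, h2, h3, h4, h5, h6⟩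
  | or A C =>
      rcases hv with ⟨D1, r, h1, h2, h3⟩ | ⟨D1, r, h1, h2, h3⟩
      · exact Or.inl ⟨D1, Relation.ReflTransGen.trans h r, h1, h2, h3⟩
      · exact Or.inr ⟨D1, Relation.ReflTransGen.trans h r, h1, h2, h3⟩
  | imp A C =>
      obtain ⟨D1, r, h1, h2, h3⟩ := hv
      exact ⟨D1, Relation.ReflTransGen.trans h r, h1, h2, h3⟩

mutual
theorem subst_eq_self (σ : Formula → Arg) :
    ∀ (bound : Finset Formula) (D : Arg), D.assumptions ⊆ bound → Arg.subst σ bound D = D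
  | bound, .hyp A, h => by
      have : A ∈ bound := by simpa [Arg.assumptions] using h
      simp [Arg.subst, this]
  | bound, .node c prems, h => by
      rw [Arg.subst, substList_eq_self σ bound prems (by simpa [Arg.assumptions] using h)]

theorem substList_eq_self (σ : Formula → Arg) :
    ∀ (bound : Finset Formula) (l : List (List Formula × Arg)),
      assumptionsList l ⊆ bound → substList σ bound l = l
  | bound, [], _ => rfl
  | bound, pr :: rest, h => by
      rw [substList, substList_eq_self σ bound rest, subst_eq_self σ (bound ∪ pr.1.toFinset) pr.2]
      · intro x hx
        by_cases hx1 : x ∈ pr.1.toFinset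
        · exact Finset.mem_union_right _ hx1
        · refine Finset.mem_union_left _ (h ?_)
          rw [assumptionsList]
          exact Finset.mem_union_left _ (Finset.mem_sdiff.mpr ⟨hx, hx1⟩)
      · intro x hx
        refine h ?_
        rw [assumptionsList]
        exact Finset.mem_union_right _ hx
end

mutual
theorem assumptions_subst (σ : Formula → Arg) :
    ∀ (bound : Finset Formula) (D : Arg),
      (∀ G ∈ D.assumptions, G ∉ bound → (σ G).assumptions = ∅) →
      (Arg.subst σ bound D).assumptions ⊆ bound
  | bound, .hyp A, h => by
      by_cases hA : A ∈ bound
      · simp [Arg.subst, hA, Arg.assumptions, Finset.singleton_subset_iff]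
      · rw [Arg.subst, if_neg hA, h A (by simp [Arg.assumptions]) hA]
        exact Finset.empty_subset _
  | bound, .node c prems, h => by
      rw [Arg.subst]
      show (Arg.node c (substList σ bound prems)).assumptions ⊆ bound
      rw [Arg.assumptions]
      exact assumptions_substList σ bound prems (by simpa [Arg.assumptions] using h)

theorem assumptions_substList (σ : Formula → Arg) :
    ∀ (bound : Finset Formula) (l : List (List Formula × Arg)),
      (∀ G ∈ assumptionsList l, G ∉ bound → (σ G).assumptions = ∅) →
      assumptionsList (substList σ bound l) ⊆ bound
  | bound, [], _ => by rw [substList]; exact Finset.empty_subset _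
  | bound, pr :: rest, h => by
      rw [substList, assumptionsList]
      apply Finset.union_subset
      · have hsub := assumptions_subst σ (bound ∪ pr.1.toFinset) pr.2 ?_
        · intro x hx
          obtain ⟨hx1, hx2⟩ := Finset.mem_sdiff.mp hx
          rcases Finset.mem_union.mp (hsub hx1) with h1 | h1
          · exact h1
          · exact absurd h1 hx2
        · intro G hG hGb
          have hG1 : G ∉ pr.1.toFinset := fun hc => hGb (Finset.mem_union_right _ hc)
          have hGb' : G ∉ bound := fun hc => hGb (Finset.mem_union_left _ hc)
          refine h G ?_ hGb'
          rw [assumptionsList]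
          exact Finset.mem_union_left _ (Finset.mem_sdiff.mpr ⟨hG, hG1⟩)
      · refine assumptions_substList σ bound rest ?_
        intro G hG hGb
        refine h G ?_ hGb
        rw [assumptionsList]
        exact Finset.mem_union_right _ hG
end

end Aux
section Aux2
open Relation List

theorem mem_assumptionsList_map {G : Formula} {Ds : List Arg} :
    G ∈ assumptionsList (Ds.map (fun D => (([] : List Formula), D))) ↔
      ∃ D ∈ Ds, G ∈ D.assumptions := by
  induction Ds with
  | nil => simp [assumptionsList]
  | cons D rest ih => simp [assumptionsList, ih]

theorem substList_map (σ : Formula → Arg) (Ds : List Arg) :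
    substList σ ∅ (Ds.map (fun D => (([] : List Formula), D))) =
      (Ds.map (Arg.subst σ ∅)).map (fun D => (([] : List Formula), D)) := by
  induction Ds with
  | nil => rfl
  | cons D rest ih => simp [substList, ih]

theorem forall₂_mem_right {R : Arg → Formula → Prop} {Ds : List Arg} {As : List Formula}
    (h : List.Forall₂ R Ds As) : ∀ G ∈ As, ∃ d ∈ Ds, R d G := by
  induction h with
  | nil => simp
  | cons hR _ ih =>
      intro G hG
      rcases List.mem_cons.mp hG with rfl | hG
      · exact ⟨_, List.mem_cons_self, hR⟩
      · obtain ⟨d, hd, hdR⟩ := ih G hG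
        exact ⟨d, List.mem_cons_of_mem _ hd, hdR⟩

theorem forall₂_mem_left {R : Arg → Formula → Prop} {Ds : List Arg} {As : List Formula}
    (h : List.Forall₂ R Ds As) : ∀ d ∈ Ds, ∃ G ∈ As, R d G := by
  induction h with
  | nil => simp
  | cons hR _ ih =>
      intro d hd
      rcases List.mem_cons.mp hd with rfl | hd
      · exact ⟨_, List.mem_cons_self, hR⟩
      · obtain ⟨G, hG, hdR⟩ := ih d hd
        exact ⟨G, List.mem_cons_of_mem _ hG, hdR⟩

theorem forall₂_imp_mem {R S : Arg → Formula → Prop} {Ds : List Arg} {As : List Formula}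
    (h : List.Forall₂ R Ds As) (f : ∀ d ∈ Ds, ∀ G ∈ As, R d G → S d G) :
    List.Forall₂ S Ds As := by
  induction h with
  | nil => exact .nil
  | @cons d G Ds' As' hR _ ih =>
      exact .cons (f d List.mem_cons_self G List.mem_cons_self hR)
        (ih fun d hd G hG hr => f d (List.mem_cons_of_mem _ hd) G (List.mem_cons_of_mem _ hG) hr)

/-- Pick a subargument with a given conclusion. -/
noncomputable def sigOf (Ds : List Arg) (G : Formula) : Arg :=
  (Ds.find? (fun d => decide (d.concl = G))).getD (.hyp G)

theorem sigOf_spec {Ds : List Arg} {G : Formula} (h : ∃ d ∈ Ds, d.concl = G) :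
    sigOf Ds G ∈ Ds ∧ (sigOf Ds G).concl = G := by
  obtain ⟨d, hd, hdc⟩ := h
  have hsome : (Ds.find? (fun d => decide (d.concl = G))).isSome := by
    rw [List.find?_isSome]
    exact ⟨d, hd, by simp [hdc]⟩
  obtain ⟨e, he⟩ := Option.isSome_iff_exists.mp hsome
  rw [sigOf, he]
  exact ⟨List.mem_of_find?_eq_some he, by simpa using List.find?_some he⟩

/-- The uniform reduction replacing the one-step inference by `D`. -/
noncomputable def ruleRed (D : Arg) : Red := fun E =>
  match E with
  | .node _ prems => some (Arg.subst (sigOf (prems.map Prod.snd)) ∅ D)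
  | .hyp _ => none

theorem ruleRed_spec (D : Arg) (A : Formula) (Ds : List Arg) :
    ruleRed D (.node A (Ds.map (fun E => (([] : List Formula), E)))) =
      some (Arg.subst (sigOf Ds) ∅ D) := by
  simp [ruleRed, List.map_map, Function.comp]

end Aux2
section Key
open Relation List

theorem key_closed (D : Arg) (J : Set Red) (As : List Formula) (A : Formula)
    (hD : D.assumptions = As.toFinset) (hc : D.concl = A) (hL : LValid D J)
    {H : Set Red} (hJH : J ⊆ H) (hφH : ruleRed D ∈ H)
    {X : Set ARule} (hX : IsBase X) (Ds : List Arg)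
    (hF : List.Forall₂
      (fun (E : Arg) (G : Formula) => E.assumptions = ∅ ∧ E.concl = G ∧ CValid G X H E) Ds As) :
    CValid A X H (.node A (Ds.map (fun E => (([] : List Formula), E)))) := by
  have hstep : Step H (.node A (Ds.map (fun E => (([] : List Formula), E))))
      (Arg.subst (sigOf Ds) ∅ D) := Step.red hφH (ruleRed_spec D A Ds)
  apply CValid_of_reduces (Relation.ReflTransGen.single hstep)
  by_cases hcl : D.assumptions = ∅
  · rw [subst_eq_self (sigOf Ds) ∅ D (by simp [hcl])]
    have hv := hL X hX
    rw [Valid, if_pos hcl, hc] at hv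
    exact CValid.mono (subset_refl X) hJH hv
  · have hv := hL X hX
    rw [Valid, if_neg hcl] at hv
    have hres := hv (sigOf Ds) H X hJH (subset_refl X) ?_
    · rwa [hc] at hres
    · intro G hG
      rw [hD, List.mem_toFinset] at hG
      obtain ⟨d, hd, _, hdc, _⟩ := forall₂_mem_right hF G hG
      obtain ⟨hmem, hconcl⟩ := sigOf_spec ⟨d, hd, hdc⟩
      obtain ⟨G', _, he1, he2, he3⟩ := forall₂_mem_left hF _ hmem
      have : G' = G := by rw [← he2, hconcl]
      subst this
      exact ⟨he1, hconcl, he3⟩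

theorem key_rule (D : Arg) (J : Set Red) (As : List Formula) (A : Formula)
    (hD : D.assumptions = As.toFinset) (hc : D.concl = A) (hL : LValid D J)
    {B : Set ARule} (hB : IsBase B) :
    RuleValidOn B (insert (ruleRed D) J) As A := by
  intro H hJ'H X hBX Ds hF
  have hφH : ruleRed D ∈ H := hJ'H (Set.mem_insert _ _)
  have hJH : J ⊆ H := (Set.subset_insert _ _).trans hJ'H
  have hXbase : IsBase X := hB.trans hBX
  rw [Valid]
  by_cases hN : (Arg.node A (Ds.map (fun E => (([] : List Formula), E)))).assumptions = ∅
  · rw [if_pos hN]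
    have hclosed : ∀ d ∈ Ds, d.assumptions = ∅ := by
      intro d hd
      rw [Arg.assumptions] at hN
      rw [Finset.eq_empty_iff_forall_notMem]
      intro x hx
      have : x ∈ assumptionsList (Ds.map (fun E => (([] : List Formula), E))) :=
        mem_assumptionsList_map.mpr ⟨d, hd, hx⟩
      rw [hN] at this
      exact absurd this (Finset.notMem_empty x)
    show CValid A X H _
    apply key_closed D J As A hD hc hL hJH hφH hXbase Ds
    refine forall₂_imp_mem hF ?_
    intro d hd G _ ⟨hdc, hdv⟩
    rw [Valid, if_pos (hclosed d hd), hdc] at hdv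
    exact ⟨hclosed d hd, hdc, hdv⟩
  · rw [if_neg hN]
    intro σ' H' X' hHH' hXX' hσ'
    show CValid A X' H' _
    rw [Arg.subst, substList_map]
    apply key_closed D J As A hD hc hL (hJH.trans hHH') (hHH' hφH) (hXbase.trans hXX')
    rw [List.forall₂_map_left_iff]
    refine forall₂_imp_mem hF ?_
    intro d hd G _ ⟨hdc, hdv⟩
    have hdsub : d.assumptions ⊆
        (Arg.node A (Ds.map (fun E => (([] : List Formula), E)))).assumptions := by
      rw [Arg.assumptions]
      intro x hx
      exact mem_assumptionsList_map.mpr ⟨d, hd, hx⟩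
    have hclosed' : (Arg.subst σ' ∅ d).assumptions = ∅ := by
      rw [Finset.eq_empty_iff_forall_notMem]
      intro x hx
      have := assumptions_subst σ' ∅ d (fun G hG _ => (hσ' G (hdsub hG)).1) hx
      exact absurd this (Finset.notMem_empty x)
    have hconcl' : (Arg.subst σ' ∅ d).concl = G := by
      cases d with
      | hyp G₀ =>
          have : G₀ = G := hdc
          subst this
          rw [Arg.subst, if_neg (Finset.notMem_empty _)]
          exact (hσ' G₀ (hdsub (by simp [Arg.assumptions]))).2.1
      | node c prems => rw [Arg.subst]; exact hdc
    refine ⟨hclosed', hconcl', ?_⟩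
    by_cases hdcl : d.assumptions = ∅
    · rw [subst_eq_self σ' ∅ d (by simp [hdcl])]
      rw [Valid, if_pos hdcl, hdc] at hdv
      exact CValid.mono hXX' hHH' hdv
    · rw [Valid, if_neg hdcl] at hdv
      have := hdv σ' H' X' hHH' hXX' (fun G hG => hσ' G (hdsub hG))
      rwa [hdc] at this

end Key
theorem hypNode_assumptions (A : Formula) (As : List Formula) :
    (Arg.node A (As.map (fun G => (([] : List Formula), Arg.hyp G)))).assumptions
      = As.toFinset := by
  rw [Arg.assumptions]
  induction As with
  | nil => simp [assumptionsList]
  | cons G rest ih => simp [assumptionsList, Arg.assumptions, ih]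

/-- with `Γ = {A₁,…,Aₙ}`, `Γ ⊨ A` in miP-tV iff the inference rule
from `A₁,…,Aₙ` to `A` (with no dischargement) is logically valid relative to some
set of reductions `J`. -/
theorem entails_iff_rule_logically_valid (As : List Formula) (A : Formula) :
    Entails As.toFinset A ↔
      ∃ J : Set Red, ∀ B : Set ARule, IsBase B → RuleValidOn B J As A := by
  constructor
  · rintro ⟨D, J, hD, hc, hL⟩
    exact ⟨insert (ruleRed D) J, fun B hB => key_rule D J As A hD hc hL hB⟩
  · rintro ⟨J, h⟩
    refine ⟨.node A (As.map (fun G => (([] : List Formula), Arg.hyp G))), J,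
      hypNode_assumptions A As, rfl, ?_⟩
    intro B hB
    have hF : List.Forall₂ (fun (E : Arg) (G : Formula) => E.concl = G ∧ Valid B E J)
        (As.map Arg.hyp) As := by
      rw [List.forall₂_map_left_iff]
      refine List.forall₂_same.mpr ?_
      intro G hG
      refine ⟨rfl, ?_⟩
      rw [Valid]
      have hne : (Arg.hyp G).assumptions ≠ ∅ := by
        simp [Arg.assumptions]
      rw [if_neg hne]
      intro σ H X _ _ hσ
      rw [Arg.subst, if_neg (Finset.notMem_empty _)]
      have := hσ G (by simp [Arg.assumptions])
      rw [show (Arg.hyp G).concl = G from rfl]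
      exact this.2.2
    have := h B hB J (subset_refl J) B (subset_refl B) (As.map Arg.hyp) hF
    rwa [List.map_map] at this
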